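/- Let M be a commutative idempotent monoid acting additively on an abelian group G, F : M → G a function satisfying the chain rule, and X_1, …, X_n, Y ∈ M. Then the following are equivalent: (1) X_1, …, X_n are mutually F-independent given Y; (2) Y.DTC_F(X_1; …; X_n) = 0; (3) (Y·X_{[n]∖I}).F(;_{i∈I} X_i) = 0 for all I ⊆ [n] with |I| ≥ 2; (4) Y.F(X_i; X_{[n]∖{i}}) = 0 for all i = 1, …, n. -/

import Mathlib

namespace AMRF
/-- An additive monoid action of a commutative monoid `M` on an abelian group `G`. -/
structure MAction (M G : Type*) [CommMonoid M] [AddCommGroup G] where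
  act : M → G → G
  act_one : ∀ g, act 1 g = g
  act_mul : ∀ X Y g, act X (act Y g) = act (X * Y) g
  act_add : ∀ X g h, act X (g + h) = act X g + act X h

variable {M G : Type*} [CommMonoid M] [AddCommGroup G]

/-- `F : M → G` satisfies the chain rule `F(XY) = F(X) + X.F(Y)`. -/
def ChainRule (A : MAction M G) (F : M → G) : Prop :=
  ∀ X Y : M, F (X * Y) = F X + A.act X (F Y)

/-- Higher-order terms on a *reversed* argument list: the head of the list is the *last*
argument `Y_q` in `F_q(Y₁; …; Y_q)`. -/
def Fseq (A : MAction M G) (F : M → G) : List M → G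
  | [] => 0
  | [Y] => F Y
  | Y :: Z :: l => Fseq A F (Z :: l) - A.act Y (Fseq A F (Z :: l))

/-- `Fof A F [Y₁, …, Y_q] = F_q(Y₁; …; Y_q)`, defined inductively by
`F_q(Y₁; …; Y_q) = F_{q−1}(Y₁; …; Y_{q−1}) − Y_q.F_{q−1}(Y₁; …; Y_{q−1})`. -/
def Fof (A : MAction M G) (F : M → G) (l : List M) : G :=
  Fseq A F l.reverse

/-- The interaction term `F(;_{i∈I} X_i)`, with arguments in increasing index order. -/
def Fint (A : MAction M G) (F : M → G) {ι : Type*} [LinearOrder ι] (X : ι → M)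
    (I : Finset ι) : G :=
  Fof A F ((I.sort (· ≤ ·)).map X)

-- auxiliary lemmas
def actHom (A : MAction M G) (Z : M) : G →+ G :=
  AddMonoidHom.mk' (A.act Z) (A.act_add Z)

lemma act_zero (A : MAction M G) (Z : M) : A.act Z 0 = 0 := (actHom A Z).map_zero

lemma act_sub (A : MAction M G) (Z : M) (g h : G) :
    A.act Z (g - h) = A.act Z g - A.act Z h := (actHom A Z).map_sub g h

lemma act_sum (A : MAction M G) (Z : M) {ι : Type*} (s : Finset ι) (f : ι → G) :
    A.act Z (∑ i ∈ s, f i) = ∑ i ∈ s, A.act Z (f i) := map_sum (actHom A Z) f s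

lemma act_zsmul (A : MAction M G) (Z : M) (m : ℤ) (g : G) :
    A.act Z (m • g) = m • A.act Z g := (actHom A Z).map_zsmul m g

variable {A : MAction M G} {F : M → G}

lemma F_one (hF : ChainRule A F) : F 1 = 0 := by
  have h := hF 1 1
  rw [one_mul, A.act_one] at h
  exact (left_eq_add.mp h)

lemma act_self (hidem : ∀ x : M, x * x = x) (hF : ChainRule A F) (x : M) :
    A.act x (F x) = 0 := by
  have h := hF x x
  rw [hidem x] at h
  exact left_eq_add.mp h

lemma second_symm (hF : ChainRule A F) (u v : M) :
    F u - A.act v (F u) = F v - A.act u (F v) := by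
  have h1 := hF u v
  have h2 := hF v u
  rw [mul_comm] at h2
  exact sub_eq_sub_iff_add_eq_add.mpr (h1.symm.trans h2)

lemma prod_idem (hidem : ∀ x : M, x * x = x) {ι : Type*} (X : ι → M) (s : Finset ι) :
    (∏ a ∈ s, X a) * ∏ a ∈ s, X a = ∏ a ∈ s, X a := by
  rw [← Finset.prod_mul_distrib]
  exact Finset.prod_congr rfl fun a _ => hidem _

lemma mul_prod_mem (hidem : ∀ x : M, x * x = x) {ι : Type*} [DecidableEq ι] (X : ι → M)
    {s : Finset ι} {k : ι} (hk : k ∈ s) :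
    X k * ∏ a ∈ s, X a = ∏ a ∈ s, X a := by
  rw [← Finset.mul_prod_erase s X hk, ← mul_assoc, hidem]

lemma prod_mul_prod_subset (hidem : ∀ x : M, x * x = x) {ι : Type*} [DecidableEq ι] (X : ι → M)
    {s t : Finset ι} (h : t ⊆ s) :
    (∏ a ∈ t, X a) * ∏ a ∈ s, X a = ∏ a ∈ s, X a := by
  rw [← Finset.prod_sdiff h, mul_comm (∏ a ∈ s \ t, X a), ← mul_assoc, prod_idem hidem]

lemma Fof_singleton (A : MAction M G) (F : M → G) (x : M) : Fof A F [x] = F x := rfl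

lemma Fof_append (A : MAction M G) (F : M → G) {l : List M} (hl : l ≠ []) (b : M) :
    Fof A F (l ++ [b]) = Fof A F l - A.act b (Fof A F l) := by
  have hrev : l.reverse ≠ [] := by simpa using hl
  obtain ⟨y, ys, hys⟩ := List.exists_cons_of_ne_nil hrev
  unfold Fof
  rw [List.reverse_append, List.reverse_singleton, List.singleton_append, hys]
  rfl

lemma sort_max {ι : Type*} [LinearOrder ι] [DecidableEq ι] (s : Finset ι) (hs : s.Nonempty) :
    s.sort (· ≤ ·) = ((s.erase (s.max' hs)).sort (· ≤ ·)) ++ [s.max' hs] := by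
  set b := s.max' hs with hb
  apply fun h1 h2 => List.Perm.eq_of_pairwise' (Finset.pairwise_sort _ _) h2 h1
  · apply Multiset.coe_eq_coe.mp
    rw [Finset.sort_eq, ← Multiset.coe_add, Finset.sort_eq, Multiset.coe_singleton,
      Finset.erase_val, add_comm, Multiset.singleton_add,
      Multiset.cons_erase (Finset.mem_def.mp (s.max'_mem hs))]
  · rw [List.pairwise_append]
    refine ⟨Finset.pairwise_sort _ _, List.pairwise_singleton _ _, ?_⟩
    intro x hx y hy
    rw [List.mem_singleton] at hy
    subst hy
    exact s.le_max' x (Finset.mem_of_mem_erase (by simpa using hx))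

lemma Fint_singleton {ι : Type*} [LinearOrder ι] (X : ι → M) (i : ι) :
    Fint A F X {i} = F (X i) := by
  unfold Fint
  rw [Finset.sort_singleton]
  rfl

lemma Fint_erase_max {ι : Type*} [LinearOrder ι] [DecidableEq ι] (X : ι → M) {I : Finset ι}
    (hI : I.Nonempty) (hne : (I.erase (I.max' hI)).Nonempty) :
    Fint A F X I = Fint A F X (I.erase (I.max' hI))
      - A.act (X (I.max' hI)) (Fint A F X (I.erase (I.max' hI))) := by
  unfold Fint
  rw [sort_max I hI, List.map_append]
  have hl : ((I.erase (I.max' hI)).sort (· ≤ ·)).map X ≠ [] := by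
    intro h
    rw [List.map_eq_nil_iff] at h
    have hc : (I.erase (I.max' hI)).card = 0 := by
      rw [← Finset.length_sort (α := ι) (r := (· ≤ ·)), h]
      rfl
    rw [Finset.card_eq_zero] at hc
    rw [hc] at hne
    exact Finset.not_nonempty_empty hne
  exact Fof_append A F hl (X (I.max' hI))

lemma act_Fint (hF : ChainRule A F) {ι : Type*} [LinearOrder ι] [DecidableEq ι] (X : ι → M) (I : Finset ι) :
    ∀ i ∈ I, ∀ W : M,
      A.act W (Fint A F X I) =
        ∑ S ∈ (I.erase i).powerset, (-1 : ℤ) ^ S.card •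
          A.act (W * ∏ a ∈ S, X a) (F (X i)) := by
  induction I using Finset.strongInduction with
  | _ I ih =>
    intro i hi W
    by_cases hsing : I = {i}
    · subst hsing
      rw [Fint_singleton]
      simp [mul_one]
    · have hne : I.Nonempty := ⟨i, hi⟩
      set b := I.max' hne with hbdef
      have hbI : b ∈ I := I.max'_mem hne
      have herase_ne : (I.erase b).Nonempty := by
        rcases Finset.eq_singleton_or_nontrivial hi with h | h
        · exact absurd h hsing
        · obtain ⟨u, hu, v, hv, huv⟩ := h
          rcases eq_or_ne u b with rfl | hub
          · exact ⟨v, Finset.mem_erase.mpr ⟨fun h => huv h.symm, hv⟩⟩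
          · exact ⟨u, Finset.mem_erase.mpr ⟨hub, hu⟩⟩
      have hrec := Fint_erase_max (A := A) (F := F) X hne herase_ne
      rw [← hbdef] at hrec
      have hsub : I.erase b ⊂ I := Finset.erase_ssubset hbI
      rcases eq_or_ne i b with rfl | hib
      · -- i = b : transfer through some j in the erase, using symmetry
        obtain ⟨j, hj⟩ := herase_ne
        have key := ih (I.erase b) hsub j hj
        have hj' : j ∉ (I.erase b).erase j := Finset.notMem_erase j _
        rw [hrec, act_sub, A.act_mul, key W, key (W * X b)]
        conv_rhs => rw [(Finset.insert_erase hj).symm, Finset.sum_powerset_insert hj']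
        rw [← Finset.sum_sub_distrib, ← Finset.sum_add_distrib]
        apply Finset.sum_congr rfl
        intro S hS
        rw [Finset.mem_powerset] at hS
        have hjS : j ∉ S := fun h => hj' (hS h)
        have e1 : W * X b * ∏ a ∈ S, X a = (W * ∏ a ∈ S, X a) * X b := mul_right_comm _ _ _
        have e2 : W * ∏ a ∈ insert j S, X a = (W * ∏ a ∈ S, X a) * X j := by
          rw [Finset.prod_insert hjS, ← mul_assoc, mul_right_comm]
        have f1 : A.act ((W * ∏ a ∈ S, X a) * X b) (F (X j))
            = A.act (W * ∏ a ∈ S, X a) (A.act (X b) (F (X j))) := (A.act_mul _ _ _).symm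
        have f2 : A.act ((W * ∏ a ∈ S, X a) * X j) (F (X b))
            = A.act (W * ∏ a ∈ S, X a) (A.act (X j) (F (X b))) := (A.act_mul _ _ _).symm
        rw [e1, e2, f1, f2, ← smul_sub, ← act_sub, second_symm hF,
          act_sub, smul_sub, Finset.card_insert_of_notMem hjS, pow_succ, mul_neg_one,
          neg_smul, ← sub_eq_add_neg]
      · -- i ≠ b
        have hi' : i ∈ I.erase b := Finset.mem_erase.mpr ⟨hib, hi⟩
        have key := ih (I.erase b) hsub i hi'
        have hb' : b ∉ (I.erase b).erase i := fun h =>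
          Finset.notMem_erase b I (Finset.mem_of_mem_erase h)
        have hIe : I.erase i = insert b ((I.erase b).erase i) := by
          rw [Finset.erase_right_comm]
          exact (Finset.insert_erase (Finset.mem_erase.mpr ⟨Ne.symm hib, hbI⟩)).symm
        rw [hrec, act_sub, A.act_mul, key W, key (W * X b)]
        conv_rhs => rw [hIe, Finset.sum_powerset_insert hb']
        rw [← Finset.sum_sub_distrib, ← Finset.sum_add_distrib]
        apply Finset.sum_congr rfl
        intro S hS
        rw [Finset.mem_powerset] at hS
        have hbS : b ∉ S := fun h => hb' (hS h)
        rw [Finset.card_insert_of_notMem hbS, Finset.prod_insert hbS, pow_succ,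
          mul_neg_one, neg_smul, ← sub_eq_add_neg, ← mul_assoc]

lemma act_Fint_insert (hF : ChainRule A F) {ι : Type*} [LinearOrder ι] [DecidableEq ι] (X : ι → M)
    {I : Finset ι} (hI : I.Nonempty) {k : ι} (hk : k ∉ I) (W : M) :
    A.act W (Fint A F X (insert k I)) =
      A.act W (Fint A F X I) - A.act (W * X k) (Fint A F X I) := by
  obtain ⟨i, hi⟩ := hI
  have hik : k ≠ i := fun h => hk (h ▸ hi)
  have hkIe : k ∉ I.erase i := fun h => hk (Finset.mem_of_mem_erase h)
  have hIe : (insert k I).erase i = insert k (I.erase i) := Finset.erase_insert_of_ne hik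
  rw [act_Fint hF X (insert k I) i (Finset.mem_insert_of_mem hi) W,
    act_Fint hF X I i hi W, act_Fint hF X I i hi (W * X k),
    hIe, Finset.sum_powerset_insert hkIe, ← Finset.sum_sub_distrib, ← Finset.sum_add_distrib]
  apply Finset.sum_congr rfl
  intro S hS
  rw [Finset.mem_powerset] at hS
  have hkS : k ∉ S := fun h => hkIe (hS h)
  rw [Finset.card_insert_of_notMem hkS, Finset.prod_insert hkS, pow_succ,
    mul_neg_one, neg_smul, ← mul_assoc]
  abel

section MainLemmas

variable {n : ℕ}

lemma absorb (hidem : ∀ x : M, x * x = x) (X : Fin n → M) (Y : M)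
    (h4 : ∀ i : Fin n,
      A.act Y (F (X i) - A.act (∏ j ∈ Finset.univ.erase i, X j) (F (X i))) = 0)
    (i : Fin n) {t : Finset (Fin n)} (hit : i ∉ t) :
    A.act (Y * ∏ a ∈ t, X a) (F (X i)) = A.act Y (F (X i)) := by
  have h := h4 i
  rw [act_sub, sub_eq_zero] at h
  have hYP : A.act Y (F (X i)) = A.act (Y * ∏ j ∈ Finset.univ.erase i, X j) (F (X i)) := by
    rw [h, A.act_mul]
  have hsub : t ⊆ Finset.univ.erase i := fun a ha =>
    Finset.mem_erase.mpr ⟨fun he => hit (he ▸ ha), Finset.mem_univ a⟩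
  calc A.act (Y * ∏ a ∈ t, X a) (F (X i))
      = A.act (∏ a ∈ t, X a) (A.act Y (F (X i))) := by rw [A.act_mul, mul_comm]
    _ = A.act (∏ a ∈ t, X a)
          (A.act (Y * ∏ j ∈ Finset.univ.erase i, X j) (F (X i))) := by rw [hYP]
    _ = A.act (Y * ((∏ a ∈ t, X a) * ∏ j ∈ Finset.univ.erase i, X j)) (F (X i)) := by
        rw [A.act_mul, mul_left_comm]
    _ = A.act (Y * ∏ j ∈ Finset.univ.erase i, X j) (F (X i)) := by
        rw [prod_mul_prod_subset hidem X hsub]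
    _ = A.act Y (F (X i)) := hYP.symm

lemma four_to_three (hidem : ∀ x : M, x * x = x) (hF : ChainRule A F)
    (X : Fin n → M) (Y : M)
    (h4 : ∀ i : Fin n,
      A.act Y (F (X i) - A.act (∏ j ∈ Finset.univ.erase i, X j) (F (X i))) = 0) :
    ∀ I : Finset (Fin n), 2 ≤ I.card →
      A.act (Y * ∏ a ∈ Finset.univ \ I, X a) (Fint A F X I) = 0 := by
  intro I hI
  have hne : I.Nonempty := Finset.card_pos.mp (by omega)
  obtain ⟨i, hi⟩ := hne
  rw [act_Fint hF X I i hi]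
  have hterm : ∀ S ∈ (I.erase i).powerset,
      (-1 : ℤ) ^ S.card • A.act ((Y * ∏ a ∈ Finset.univ \ I, X a) * ∏ a ∈ S, X a) (F (X i))
        = (-1 : ℤ) ^ S.card • A.act Y (F (X i)) := by
    intro S hS
    rw [Finset.mem_powerset] at hS
    have hSsub : S ⊆ I := fun a ha => Finset.mem_of_mem_erase (hS ha)
    have hdisj : Disjoint (Finset.univ \ I) S := by
      apply Finset.disjoint_left.mpr
      intro a ha haS
      exact (Finset.mem_sdiff.mp ha).2 (hSsub haS)
    have hit : i ∉ Finset.univ \ I ∪ S := by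
      rw [Finset.mem_union]
      rintro (h | h)
      · exact (Finset.mem_sdiff.mp h).2 hi
      · exact Finset.notMem_erase i I (hS h)
    rw [mul_assoc, ← Finset.prod_union hdisj, absorb hidem X Y h4 i hit]
  refine (Finset.sum_congr rfl hterm).trans ?_
  rw [← Finset.sum_smul, Finset.sum_powerset_neg_one_pow_card_of_nonempty, zero_smul]
  rw [← Finset.card_pos, Finset.card_erase_of_mem hi]
  omega

lemma chain_sum (hF : ChainRule A F) (X : Fin n → M) (Y : M)
    (habs : ∀ i : Fin n, ∀ t : Finset (Fin n), i ∉ t →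
      A.act (Y * ∏ a ∈ t, X a) (F (X i)) = A.act Y (F (X i))) :
    ∀ s t : Finset (Fin n), Disjoint s t →
      A.act (Y * ∏ a ∈ t, X a) (F (∏ a ∈ s, X a)) = ∑ i ∈ s, A.act Y (F (X i)) := by
  intro s
  induction s using Finset.induction with
  | empty => intro t _; simp [F_one hF, act_zero]
  | @insert a s ha ih =>
    intro t hdisj
    have hat : a ∉ t := Finset.disjoint_left.mp hdisj (Finset.mem_insert_self a s)
    have hst : Disjoint s (insert a t) := Finset.disjoint_insert_right.mpr
      ⟨ha, Finset.disjoint_of_subset_left (Finset.subset_insert a s) hdisj⟩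
    rw [Finset.prod_insert ha, hF (X a), A.act_add, A.act_mul]
    have e1 : (Y * ∏ x ∈ t, X x) * X a = Y * ∏ x ∈ insert a t, X x := by
      rw [Finset.prod_insert hat, mul_assoc, mul_comm (∏ x ∈ t, X x)]
    rw [e1, ih (insert a t) hst, habs a t hat, Finset.sum_insert ha]

lemma three_claim (hF : ChainRule A F) (X : Fin n → M) (Y : M)
    (h3 : ∀ I : Finset (Fin n), 2 ≤ I.card →
      A.act (Y * ∏ a ∈ Finset.univ \ I, X a) (Fint A F X I) = 0) :
    ∀ m : ℕ, ∀ I T : Finset (Fin n), 2 ≤ I.card → T ⊆ Finset.univ \ I →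
      (Finset.univ \ (I ∪ T)).card = m → A.act (Y * ∏ a ∈ T, X a) (Fint A F X I) = 0 := by
  intro m
  induction m with
  | zero =>
    intro I T hI hT hm
    have hTeq : T = Finset.univ \ I := by
      apply Finset.Subset.antisymm hT
      intro a ha
      rw [Finset.mem_sdiff] at ha
      by_contra haT
      have hmem : a ∈ Finset.univ \ (I ∪ T) := by
        rw [Finset.mem_sdiff, Finset.mem_union]
        exact ⟨Finset.mem_univ a, fun h => h.elim ha.2 haT⟩
      rw [Finset.card_eq_zero.mp hm] at hmem
      exact absurd hmem (Finset.notMem_empty a)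
    rw [hTeq]
    exact h3 I hI
  | succ m ihm =>
    intro I T hI hT hm
    have hex : (Finset.univ \ (I ∪ T)).Nonempty := by
      rw [← Finset.card_pos, hm]; omega
    obtain ⟨k, hk⟩ := hex
    rw [Finset.mem_sdiff, Finset.mem_union] at hk
    have hkI : k ∉ I := fun h => hk.2 (Or.inl h)
    have hkT : k ∉ T := fun h => hk.2 (Or.inr h)
    have hIne : I.Nonempty := Finset.card_pos.mp (by omega)
    have hrec := act_Fint_insert hF X hIne hkI (Y * ∏ a ∈ T, X a)
    have hcard : ∀ s : Finset (Fin n), (Finset.univ \ s).card = n - s.card := by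
      intro s
      rw [Finset.card_sdiff_of_subset (Finset.subset_univ s), Finset.card_univ, Fintype.card_fin]
    have hIT : (I ∪ T).card = I.card + T.card := by
      rw [Finset.card_union_of_disjoint]
      exact Finset.disjoint_left.mpr fun a haI haT =>
        (Finset.mem_sdiff.mp (hT haT)).2 haI
    have hITle : (I ∪ T).card ≤ n := by
      have := Finset.card_le_univ (I ∪ T)
      rwa [Fintype.card_fin] at this
    have h1 : A.act (Y * ∏ a ∈ T, X a) (Fint A F X (insert k I)) = 0 := by
      apply ihm (insert k I) T
      · rw [Finset.card_insert_of_notMem hkI]; omega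
      · intro a ha
        rw [Finset.mem_sdiff, Finset.mem_insert]
        refine ⟨Finset.mem_univ a, ?_⟩
        rintro (rfl | h)
        · exact hkT ha
        · exact (Finset.mem_sdiff.mp (hT ha)).2 h
      · rw [Finset.insert_union, hcard, Finset.card_insert_of_notMem (by
          rw [Finset.mem_union]; exact fun h => h.elim hkI hkT)]
        rw [hcard] at hm
        omega
    have h2 : A.act ((Y * ∏ a ∈ T, X a) * X k) (Fint A F X I) = 0 := by
      have e : (Y * ∏ a ∈ T, X a) * X k = Y * ∏ a ∈ insert k T, X a := by
        rw [Finset.prod_insert hkT, mul_assoc, mul_comm (∏ a ∈ T, X a)]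
      rw [e]
      apply ihm I (insert k T) hI
      · intro a ha
        rw [Finset.mem_insert] at ha
        rw [Finset.mem_sdiff]
        rcases ha with rfl | ha
        · exact ⟨Finset.mem_univ a, hkI⟩
        · exact ⟨Finset.mem_univ a, (Finset.mem_sdiff.mp (hT ha)).2⟩
      · rw [Finset.union_insert, hcard, Finset.card_insert_of_notMem (by
          rw [Finset.mem_union]; exact fun h => h.elim hkI hkT)]
        rw [hcard] at hm
        omega
    rw [h1, h2, sub_zero] at hrec
    exact hrec.symm

lemma act_Fint_pair (hF : ChainRule A F) (X : Fin n → M) {i j : Fin n} (hij : i ≠ j)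
    (W : M) :
    A.act W (Fint A F X {i, j}) = A.act W (F (X i)) - A.act (W * X j) (F (X i)) := by
  have hjs : i ∉ ({j} : Finset (Fin n)) := by simpa using hij
  rw [act_Fint hF X {i, j} i (Finset.mem_insert_self i {j}),
    Finset.erase_insert hjs,
    show ({j} : Finset (Fin n)) = insert j ∅ from (LawfulSingleton.insert_empty_eq j).symm,
    Finset.sum_powerset_insert (Finset.notMem_empty j), Finset.powerset_empty,
    Finset.sum_singleton, Finset.sum_singleton]
  simp only [Finset.card_empty, Finset.card_insert_of_notMem (Finset.notMem_empty j),
    pow_zero, pow_one, Finset.prod_empty, Finset.prod_insert (Finset.notMem_empty j),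
    mul_one, one_smul, neg_smul, one_smul, zero_add, pow_succ]
  abel

lemma three_to_four (hF : ChainRule A F) (X : Fin n → M) (Y : M)
    (h3 : ∀ I : Finset (Fin n), 2 ≤ I.card →
      A.act (Y * ∏ a ∈ Finset.univ \ I, X a) (Fint A F X I) = 0)
    (i : Fin n) :
    A.act Y (F (X i) - A.act (∏ j ∈ Finset.univ.erase i, X j) (F (X i))) = 0 := by
  have main : ∀ s : Finset (Fin n), i ∉ s →
      A.act Y (F (X i)) = A.act (Y * ∏ a ∈ s, X a) (F (X i)) := by
    intro s
    induction s using Finset.induction with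
    | empty => intro _; rw [Finset.prod_empty, mul_one]
    | @insert j s hj ih =>
      intro hins
      rw [Finset.mem_insert] at hins
      push_neg at hins
      obtain ⟨hij, his⟩ := hins
      have h1 := ih his
      have hcard2 : ({i, j} : Finset (Fin n)).card = 2 := by
        rw [Finset.card_insert_of_notMem (by simpa using hij), Finset.card_singleton]
      have hTsub : s ⊆ Finset.univ \ ({i, j} : Finset (Fin n)) := by
        intro a ha
        rw [Finset.mem_sdiff, Finset.mem_insert, Finset.mem_singleton]
        exact ⟨Finset.mem_univ a, fun h => by
          rcases h with rfl | rfl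
          · exact his ha
          · exact hj ha⟩
      have h2 := three_claim hF X Y h3 (Finset.univ \ (({i, j} : Finset (Fin n)) ∪ s)).card
        {i, j} s (by omega) hTsub rfl
      rw [act_Fint_pair hF X hij, sub_eq_zero] at h2
      have e : (Y * ∏ a ∈ s, X a) * X j = Y * ∏ a ∈ insert j s, X a := by
        rw [Finset.prod_insert hj, mul_assoc, mul_comm (∏ a ∈ s, X a)]
      rw [h1, h2, e]
  rw [act_sub, A.act_mul, sub_eq_zero]
  exact main (Finset.univ.erase i) (Finset.notMem_erase i Finset.univ)

lemma four_to_two (hidem : ∀ x : M, x * x = x) (hF : ChainRule A F)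
    (X : Fin n → M) (Y : M)
    (h4 : ∀ i : Fin n,
      A.act Y (F (X i) - A.act (∏ j ∈ Finset.univ.erase i, X j) (F (X i))) = 0) :
    A.act Y (F (∏ i, X i) - ∑ i, A.act (∏ j ∈ Finset.univ.erase i, X j) (F (X i))) = 0 := by
  have habs : ∀ i : Fin n, ∀ t : Finset (Fin n), i ∉ t →
      A.act (Y * ∏ a ∈ t, X a) (F (X i)) = A.act Y (F (X i)) :=
    fun i t hit => absorb hidem X Y h4 i hit
  rw [act_sub, act_sum]
  have h1 : A.act Y (F (∏ i, X i)) = ∑ i, A.act Y (F (X i)) := by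
    have := chain_sum hF X Y habs Finset.univ ∅ (Finset.disjoint_empty_right _)
    rwa [Finset.prod_empty, mul_one] at this
  have h2 : ∀ i ∈ Finset.univ,
      A.act Y (A.act (∏ j ∈ Finset.univ.erase i, X j) (F (X i))) = A.act Y (F (X i)) := by
    intro i _
    rw [A.act_mul]
    exact habs i _ (Finset.notMem_erase i Finset.univ)
  rw [h1, Finset.sum_congr rfl h2, sub_self]

lemma two_to_four (hidem : ∀ x : M, x * x = x) (hF : ChainRule A F)
    (X : Fin n → M) (Y : M)
    (h2 : A.act Y (F (∏ i, X i) - ∑ i, A.act (∏ j ∈ Finset.univ.erase i, X j) (F (X i))) = 0)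
    (i : Fin n) :
    A.act Y (F (X i) - A.act (∏ j ∈ Finset.univ.erase i, X j) (F (X i))) = 0 := by
  set D : G := F (∏ i, X i) - ∑ i, A.act (∏ j ∈ Finset.univ.erase i, X j) (F (X i)) with hD
  set P : M := ∏ j ∈ Finset.univ.erase i, X j with hP
  have hprod : (∏ j, X j) = X i * P := (Finset.mul_prod_erase Finset.univ X (Finset.mem_univ i)).symm
  have expand : ∀ Z : M, A.act Z D = A.act Z (F (∏ j, X j))
      - ∑ j, A.act Z (A.act (∏ k ∈ Finset.univ.erase j, X k) (F (X j))) := by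
    intro Z
    rw [hD, act_sub, act_sum]
  have claimA : A.act Y (F (∏ j, X j)) - A.act (X i * Y) (F (∏ j, X j))
      = A.act Y (F (X i)) := by
    have hFP : F (∏ j, X j) = F (X i) + A.act (X i) (F P) := by
      rw [hprod]; exact hF (X i) P
    rw [hFP, A.act_add, A.act_add, A.act_mul, A.act_mul]
    have z1 : A.act (X i * Y) (F (X i)) = 0 := by
      rw [mul_comm, ← A.act_mul, act_self hidem hF, act_zero]
    have z2 : X i * Y * X i = Y * X i := by
      rw [mul_right_comm, hidem, mul_comm]
    rw [z1, z2]
    abel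
  have claimB : ∑ j, (A.act Y (A.act (∏ k ∈ Finset.univ.erase j, X k) (F (X j)))
      - A.act (X i * Y) (A.act (∏ k ∈ Finset.univ.erase j, X k) (F (X j))))
      = A.act Y (A.act P (F (X i))) := by
    rw [Finset.sum_eq_single_of_mem i (Finset.mem_univ i)]
    · have hz : A.act (X i * Y) (A.act P (F (X i))) = 0 := by
        rw [A.act_mul, mul_comm (X i) Y, mul_assoc, mul_comm (X i) P, ← mul_assoc,
          ← A.act_mul, act_self hidem hF, act_zero]
      rw [← hP, hz, sub_zero]
    · intro j _ hji
      have hiP : X i * ∏ k ∈ Finset.univ.erase j, X k = ∏ k ∈ Finset.univ.erase j, X k :=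
        mul_prod_mem hidem X (Finset.mem_erase.mpr ⟨Ne.symm hji, Finset.mem_univ i⟩)
      rw [A.act_mul, A.act_mul, mul_comm (X i) Y, mul_assoc, hiP, sub_self]
  have key : A.act Y (F (X i) - A.act P (F (X i)))
      = A.act Y D - A.act (X i * Y) D := by
    rw [act_sub, expand Y, expand (X i * Y), ← claimA, ← claimB,
      Finset.sum_sub_distrib]
    abel
  rw [key, show A.act (X i * Y) D = A.act (X i) (A.act Y D) from (A.act_mul _ _ _).symm,
    h2, act_zero, sub_zero]

end MainLemmas

/-- The `F`-independence relation: `X ⊥_F Y | Z` iff `Z.F(X; Y) = 0`, where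
`F(X; Y) = F(X) − Y.F(X)` is the second-order term. -/
def Findep (A : MAction M G) (F : M → G) (X Y Z : M) : Prop :=
  A.act Z (F X - A.act Y (F X)) = 0

/-- The `F`-dual total correlation `DTC_F(X₁; …; X_n) = F(X_{[n]}) − Σᵢ X_{[n]∖{i}}.F(Xᵢ)`. -/
def DTC (A : MAction M G) (F : M → G) {n : ℕ} (X : Fin n → M) : G :=
  F (∏ i, X i) - ∑ i, A.act (∏ j ∈ Finset.univ.erase i, X j) (F (X i))

/-- For `X₁, …, X_n, Y ∈ M` the following are equivalent:
(1) `X₁, …, X_n` are mutually `F`-independent given `Y`;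
(2) `Y.DTC_F(X₁; …; X_n) = 0`;
(3) `(Y·X_{[n]∖I}).F(;_{i∈I} Xᵢ) = 0` for all `I ⊆ [n]` with `|I| ≥ 2`;
(4) `Y.F(Xᵢ; X_{[n]∖{i}}) = 0` for all `i`. -/
theorem mutual_F_independence_iff_DTC
    {M G : Type*} [CommMonoid M] [AddCommGroup G]
    (hidem : ∀ x : M, x * x = x)
    (A : MAction M G) (F : M → G) (hF : ChainRule A F)
    (n : ℕ) (X : Fin n → M) (Y : M) :
    List.TFAE
      [ ∀ i : Fin n, Findep A F (X i) (∏ j ∈ Finset.univ.erase i, X j) Y,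
        A.act Y (DTC A F X) = 0,
        ∀ I : Finset (Fin n), 2 ≤ I.card →
          A.act (Y * ∏ a ∈ Finset.univ \ I, X a) (Fint A F X I) = 0,
        ∀ i : Fin n,
          A.act Y (F (X i) - A.act (∏ j ∈ Finset.univ.erase i, X j) (F (X i))) = 0 ] := by
  tfae_have 1 ↔ 4 := Iff.rfl
  tfae_have 4 → 2 := fun h4 => four_to_two hidem hF X Y h4
  tfae_have 2 → 4 := fun h2 => two_to_four hidem hF X Y h2
  tfae_have 4 → 3 := fun h4 => four_to_three hidem hF X Y h4
  tfae_have 3 → 4 := fun h3 => three_to_four hF X Y h3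
  tfae_finish

end AMRF
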